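/- Let H be a complex Hilbert space and let A, B be positive invertible bounded operators on H. Then for every v ∈ (0,1), the weighted operator identric mean satisfies I_v(A,B) = I(A∇_v B, A) ♯_v I(A∇_v B, B). -/

import Mathlib

set_option maxHeartbeats 1000000

/-- Scalar weighted logarithmic mean `L_v(a,b)`, extended by `L_v(a,a) = a`. -/
noncomputable def wLogScalar (v a b : ℝ) : ℝ :=
  if a = b then a else
    (1 / (Real.log a - Real.log b)) *
      (((1 - v) / v) * (a - a ^ (1 - v) * b ^ v) + (v / (1 - v)) * (a ^ (1 - v) * b ^ v - b))

/-- Scalar weighted identric mean `I_v(a,b)`, extended by `I_v(a,a) = a`. -/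
noncomputable def wIdScalar (v a b : ℝ) : ℝ :=
  if a = b then a else
    Real.exp (-1) *
      ((1 - v) * a + v * b) ^
        ((1 - 2 * v) * ((1 - v) * a + v * b) / (v * (1 - v) * (b - a))) *
      (b ^ (v * b / (1 - v)) / a ^ ((1 - v) * a / v)) ^ (b - a)⁻¹

variable {H : Type*} [NormedAddCommGroup H] [InnerProductSpace ℂ H] [CompleteSpace H]

/-- The operator mean `m_f(A,B) = A^{1/2} f(A^{-1/2} B A^{-1/2}) A^{1/2}` associated to a
function `f : (0,∞) → ℝ` with `f(1) = 1`, via the continuous functional calculus. -/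
noncomputable def opMeanOf (f : ℝ → ℝ) (A B : H →L[ℂ] H) : H →L[ℂ] H :=
  cfc Real.sqrt A *
    cfc f (Ring.inverse (cfc Real.sqrt A) * B * Ring.inverse (cfc Real.sqrt A)) *
      cfc Real.sqrt A

/-- The weighted operator arithmetic mean `A ∇_v B = (1-v)A + vB`. -/
noncomputable def opWArith (v : ℝ) (A B : H →L[ℂ] H) : H →L[ℂ] H :=
  (1 - v : ℝ) • A + v • B

/-- The weighted operator geometric mean `A ♯_v B = A^{1/2}(A^{-1/2}BA^{-1/2})^v A^{1/2}`. -/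
noncomputable def opWGeom (v : ℝ) (A B : H →L[ℂ] H) : H →L[ℂ] H :=
  opMeanOf (fun x => x ^ v) A B

/-- The operator logarithmic mean, with representing function `f_L(x) = (x-1)/log x`. -/
noncomputable def opLog (A B : H →L[ℂ] H) : H →L[ℂ] H :=
  opMeanOf (fun x => if x = 1 then 1 else (x - 1) / Real.log x) A B

/-- The operator identric mean, with representing function `f_I(x) = e⁻¹ x^{x/(x-1)}`. -/
noncomputable def opId (A B : H →L[ℂ] H) : H →L[ℂ] H :=
  opMeanOf (fun x => if x = 1 then 1 else Real.exp (-1) * x ^ (x / (x - 1))) A B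

/-- The weighted operator logarithmic mean, with representing function `F_{L_v}(x) = L_v(1,x)`. -/
noncomputable def opWLog (v : ℝ) (A B : H →L[ℂ] H) : H →L[ℂ] H :=
  opMeanOf (fun x => wLogScalar v 1 x) A B

/-- The weighted operator identric mean, with representing function `F_{I_v}(x) = I_v(1,x)`. -/
noncomputable def opWId (v : ℝ) (A B : H →L[ℂ] H) : H →L[ℂ] H :=
  opMeanOf (fun x => wIdScalar v 1 x) A B

/-! ### Auxiliary material -/

section conj
variable {A : Type*} [CStarAlgebra A]

/-- Conjugation by a unitary as a star algebra homomorphism. -/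
noncomputable def unitaryConjSAH (u : unitary A) : A →⋆ₐ[ℝ] A where
  toFun x := (u : A) * x * star (u : A)
  map_one' := by
    show (u : A) * 1 * star (u : A) = 1
    rw [mul_one]
    exact (Unitary.mem_iff.mp u.2).2
  map_mul' x y := by
    have h : star (u : A) * (u : A) = 1 := (Unitary.mem_iff.mp u.2).1
    calc (u : A) * (x * y) * star (u : A)
        = ((u : A) * x) * (star (u : A) * (u : A)) * (y * star (u : A)) := by
          rw [h, mul_one]; noncomm_ring
      _ = ((u : A) * x * star (u : A)) * ((u : A) * y * star (u : A)) := by noncomm_ring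
  map_zero' := by simp
  map_add' x y := by noncomm_ring
  commutes' r := by
    show (u : A) * algebraMap ℝ A r * star (u : A) = algebraMap ℝ A r
    rw [Algebra.algebraMap_eq_smul_one, mul_smul_comm, smul_mul_assoc, mul_one,
      (Unitary.mem_iff.mp u.2).2]
  map_star' x := by simp [star_mul, mul_assoc]

lemma spectrum_unitary_conj (u : unitary A) (z : A) :
    spectrum ℝ ((u : A) * z * star (u : A)) = spectrum ℝ z := by
  let w : Aˣ := ⟨u, star (u : A), (Unitary.mem_iff.mp u.2).2, (Unitary.mem_iff.mp u.2).1⟩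
  exact spectrum.units_conjugate (u := w)

lemma cfc_unitary_conj (u : unitary A) (z : A) (hz : IsSelfAdjoint z)
    (f : ℝ → ℝ) (hf : ContinuousOn f (spectrum ℝ z)) :
    cfc f ((u : A) * z * star (u : A)) = (u : A) * cfc f z * star (u : A) := by
  have hs : spectrum ℝ ((u : A) * z * star (u : A)) = spectrum ℝ z :=
    spectrum_unitary_conj u z
  have hz' : IsSelfAdjoint ((u : A) * z * star (u : A)) := by
    rw [IsSelfAdjoint, star_mul, star_mul, star_star, hz.star_eq, mul_assoc]
  let e : C(spectrum ℝ z, spectrum ℝ ((u : A) * z * star (u : A))) :=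
    ⟨fun x => ⟨x, hs.symm ▸ x.2⟩, by fun_prop⟩
  let φ : C(spectrum ℝ ((u : A) * z * star (u : A)), ℝ) →⋆ₐ[ℝ] A :=
    (unitaryConjSAH u).comp <| (cfcHom hz (R := ℝ)).comp <|
      ContinuousMap.compStarAlgHom' ℝ ℝ e
  have hφ : cfcHom hz' (R := ℝ) = φ := by
    refine cfcHom_eq_of_continuous_of_map_id hz' φ ?_ ?_
    · have h1 : Continuous fun g : C(spectrum ℝ ((u : A) * z * star (u : A)), ℝ) =>
          cfcHom hz (R := ℝ) (ContinuousMap.compStarAlgHom' ℝ ℝ e g) :=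
        (cfcHom_isClosedEmbedding hz).continuous.comp (ContinuousMap.continuous_precomp e)
      exact (continuous_const.mul h1).mul continuous_const
    · show (u : A) * cfcHom hz (((ContinuousMap.id ℝ).restrict _).comp e) * star (u : A) = _
      have he : ((ContinuousMap.id ℝ).restrict (spectrum ℝ ((u : A) * z * star (u : A)))).comp e
          = (ContinuousMap.id ℝ).restrict (spectrum ℝ z) := by ext x; rfl
      rw [he, cfcHom_id hz]
  rw [cfc_apply f ((u : A) * z * star (u : A)) hz' (by rwa [hs]),
    cfc_apply f z hz hf, hφ]
  show (u : A) * cfcHom hz _ * star (u : A) = _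
  congr 2
end conj

section scalar

/-- The representing function of the identric mean. -/
noncomputable def fdI : ℝ → ℝ := fun x => if x = 1 then 1 else Real.exp (-1) * x ^ (x / (x - 1))

lemma fdI_pos {y : ℝ} (hy : 0 < y) : 0 < fdI y := by
  unfold fdI
  split
  · exact one_pos
  · exact mul_pos (Real.exp_pos _) (Real.rpow_pos_of_pos hy _)

lemma log_inj {a b : ℝ} (ha : 0 < a) (hb : 0 < b) (h : Real.log a = Real.log b) : a = b := by
  rw [← Real.exp_log ha, ← Real.exp_log hb, h]

lemma fdI_continuousOn : ContinuousOn fdI (Set.Ioi 0) := by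
  intro y hy
  rcases eq_or_ne y 1 with rfl | hy1
  · -- continuity at 1
    have hslope : Filter.Tendsto (fun x : ℝ => Real.log x / (x - 1))
        (nhdsWithin 1 {(1:ℝ)}ᶜ) (nhds 1) := by
      have h := hasDerivAt_iff_tendsto_slope.mp (Real.hasDerivAt_log one_ne_zero)
      simp only [slope_fun_def_field, Real.log_one, sub_zero, inv_one] at h
      exact h
    have hid : Filter.Tendsto (fun x : ℝ => x) (nhdsWithin 1 {(1:ℝ)}ᶜ) (nhds 1) :=
      Filter.Tendsto.mono_left Filter.tendsto_id nhdsWithin_le_nhds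
    have h1 : Filter.Tendsto (fun x : ℝ => x * (Real.log x / (x - 1)))
        (nhdsWithin 1 {(1:ℝ)}ᶜ) (nhds 1) := by
      have := hid.mul hslope
      simpa using this
    have h2 : Filter.Tendsto (fun x : ℝ => Real.exp (-1) * Real.exp (x * (Real.log x / (x - 1))))
        (nhdsWithin 1 {(1:ℝ)}ᶜ) (nhds 1) := by
      have h3 := (Real.continuous_exp.tendsto 1).comp h1
      have h4 := h3.const_mul (Real.exp (-1))
      have h5 : Real.exp (-1) * Real.exp 1 = 1 := by
        rw [← Real.exp_add]; norm_num
      rwa [h5] at h4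
    have hev : (fun x : ℝ => Real.exp (-1) * Real.exp (x * (Real.log x / (x - 1))))
        =ᶠ[nhdsWithin 1 {(1:ℝ)}ᶜ] fdI := by
      have hpos : ∀ᶠ x : ℝ in nhdsWithin 1 {(1:ℝ)}ᶜ, 0 < x :=
        (eventually_gt_nhds zero_lt_one).filter_mono nhdsWithin_le_nhds
      filter_upwards [self_mem_nhdsWithin, hpos] with x hx1 hx0
      have hx1' : x ≠ 1 := hx1
      rw [fdI]
      simp only [if_neg hx1']
      rw [Real.rpow_def_of_pos hx0]
      congr 1
      ring
    have h6 : Filter.Tendsto fdI (nhdsWithin 1 {(1:ℝ)}ᶜ) (nhds 1) := h2.congr' hev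
    have h7 : ContinuousAt fdI 1 := by
      rw [← continuousWithinAt_compl_self]
      have : fdI 1 = 1 := by rw [fdI]; simp
      rw [ContinuousWithinAt, this]
      exact h6
    exact h7.continuousWithinAt
  · have hne : (fun x : ℝ => Real.exp (-1) * x ^ (x / (x - 1))) =ᶠ[nhds y] fdI := by
      filter_upwards [isOpen_ne.mem_nhds hy1] with x hx
      rw [fdI]
      simp only [if_neg hx]
    have hb : ContinuousAt (fun x : ℝ => x ^ (x / (x - 1))) y := by
      apply ContinuousAt.rpow continuousAt_id ?_ (Or.inl (ne_of_gt hy))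
      exact continuousAt_id.div (continuousAt_id.sub continuousAt_const)
        (sub_ne_zero.mpr hy1)
    exact ((continuousAt_const.mul hb).congr hne).continuousWithinAt

lemma scalar_key {v x : ℝ} (hv0 : 0 < v) (hv1 : v < 1) (hx : 0 < x) :
    wIdScalar v 1 x =
      (1 - v + v * x) * fdI (1 / (1 - v + v * x)) *
        (((1 - v + v * x) * fdI (x / (1 - v + v * x))) /
          ((1 - v + v * x) * fdI (1 / (1 - v + v * x)))) ^ v := by
  have hG : 0 < 1 - v + v * x := by nlinarith
  rcases eq_or_ne x 1 with rfl | hx1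
  · have h1 : 1 - v + v * (1:ℝ) = 1 := by ring
    rw [h1]
    simp [wIdScalar, fdI]
  · have hgne : (1 - v + v * x) ≠ 0 := hG.ne'
    have hG1 : 1 - v + v * x ≠ 1 := by
      intro h
      apply hx1
      have h2 : v * (x - 1) = 0 := by linarith
      rcases mul_eq_zero.mp h2 with h' | h'
      · exact absurd h' hv0.ne'
      · linarith
    have h1g : 1 / (1 - v + v * x) ≠ 1 := by
      intro h
      rw [div_eq_one_iff_eq hgne] at h
      exact hG1 h.symm
    have hxg : x / (1 - v + v * x) ≠ 1 := by
      intro h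
      rw [div_eq_one_iff_eq hgne] at h
      apply hx1
      have h2 : (x - 1) * (1 - v) = 0 := by linarith
      rcases mul_eq_zero.mp h2 with h' | h'
      · linarith
      · linarith
    have hq1 : 0 < 1 / (1 - v + v * x) := by positivity
    have hq2 : 0 < x / (1 - v + v * x) := div_pos hx hG
    -- unfold
    rw [wIdScalar, if_neg (show ¬(1:ℝ) = x from fun h => hx1 h.symm)]
    simp only [fdI, if_neg h1g, if_neg hxg, mul_one, Real.one_rpow, div_one]
    -- names
    set G := 1 - v + v * x with hGe
    have h1Gz : 1 - G ≠ 0 := fun h => hG1 (by linarith)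
    have hxGz : x - G ≠ 0 := by
      intro h
      apply hx1
      have h2 : (x - 1) * (1 - v) = 0 := by rw [hGe] at h; linarith
      rcases mul_eq_zero.mp h2 with h' | h'
      · linarith
      · linarith
    have e1 : 1 / G / (1 / G - 1) = 1 / (1 - G) := by
      field_simp
    have e2 : x / G / (x / G - 1) = x / (x - G) := by
      field_simp
    rw [e1, e2]
    have hP1 : 0 < G * (Real.exp (-1) * (1 / G) ^ (1 / (1 - G))) :=
      mul_pos hG (mul_pos (Real.exp_pos _) (Real.rpow_pos_of_pos hq1 _))
    have hP2 : 0 < G * (Real.exp (-1) * (x / G) ^ (x / (x - G))) :=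
      mul_pos hG (mul_pos (Real.exp_pos _) (Real.rpow_pos_of_pos hq2 _))
    have hLHS : 0 < Real.exp (-1) * G ^ ((1 - 2 * v) * G / (v * (1 - v) * (x - 1)))
        * (x ^ (v * x / (1 - v))) ^ (x - 1)⁻¹ :=
      mul_pos (mul_pos (Real.exp_pos _) (Real.rpow_pos_of_pos hG _))
        (Real.rpow_pos_of_pos (Real.rpow_pos_of_pos hx _) _)
    refine log_inj hLHS (mul_pos hP1 (Real.rpow_pos_of_pos (div_pos hP2 hP1) _)) ?_
    rw [Real.log_mul (mul_pos (Real.exp_pos _) (Real.rpow_pos_of_pos hG _)).ne'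
        (Real.rpow_pos_of_pos (Real.rpow_pos_of_pos hx _) _).ne',
      Real.log_mul (Real.exp_pos _).ne' (Real.rpow_pos_of_pos hG _).ne',
      Real.log_exp, Real.log_rpow hG, Real.log_rpow (Real.rpow_pos_of_pos hx _),
      Real.log_rpow hx,
      Real.log_mul hP1.ne' (Real.rpow_pos_of_pos (div_pos hP2 hP1) _).ne',
      Real.log_rpow (div_pos hP2 hP1),
      Real.log_div hP2.ne' hP1.ne',
      Real.log_mul hG.ne' (mul_pos (Real.exp_pos _) (Real.rpow_pos_of_pos hq1 _)).ne',
      Real.log_mul hG.ne' (mul_pos (Real.exp_pos _) (Real.rpow_pos_of_pos hq2 _)).ne',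
      Real.log_mul (Real.exp_pos _).ne' (Real.rpow_pos_of_pos hq1 _).ne',
      Real.log_mul (Real.exp_pos _).ne' (Real.rpow_pos_of_pos hq2 _).ne',
      Real.log_exp, Real.log_rpow hq1, Real.log_rpow hq2,
      Real.log_div one_ne_zero hgne, Real.log_div hx.ne' hgne, Real.log_one]
    -- now a pure field identity in v, x, lG, lx
    have hx1' : x - 1 ≠ 0 := sub_ne_zero.mpr hx1
    have h1G' : 1 / G - 1 ≠ 0 := sub_ne_zero.mpr h1g
    have hxG' : x / G - 1 ≠ 0 := sub_ne_zero.mpr hxg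
    have hvne : v ≠ 0 := hv0.ne'
    have h1vne : (1 : ℝ) - v ≠ 0 := sub_ne_zero.mpr hv1.ne'
    field_simp
    ring

end scalar

section op
variable {H : Type*} [NormedAddCommGroup H] [InnerProductSpace ℂ H] [CompleteSpace H]

local notation "𝔅" => H →L[ℂ] H

noncomputable def sqrtOp (A : 𝔅) : 𝔅 := cfc Real.sqrt A

lemma spec_pos {A : 𝔅} (hA : 0 ≤ A) (hAu : IsUnit A) : ∀ x ∈ spectrum ℝ A, 0 < x := by
  intro x hx
  rcases (spectrum_nonneg_of_nonneg hA hx).lt_or_eq with h | h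
  · exact h
  · exact absurd (h ▸ hx) (spectrum.zero_notMem ℝ hAu)

lemma sqrtOp_isSelfAdjoint (A : 𝔅) : IsSelfAdjoint (sqrtOp A) := cfc_predicate _ _

lemma sqrtOp_nonneg {A : 𝔅} (hA : 0 ≤ A) : 0 ≤ sqrtOp A :=
  cfc_nonneg fun x _ => Real.sqrt_nonneg x

lemma sqrtOp_mul_self {A : 𝔅} (hA : 0 ≤ A) : sqrtOp A * sqrtOp A = A := by
  have hsa : IsSelfAdjoint A := IsSelfAdjoint.of_nonneg hA
  calc sqrtOp A * sqrtOp A = cfc (fun x => Real.sqrt x * Real.sqrt x) A :=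
        (cfc_mul Real.sqrt Real.sqrt A (by fun_prop) (by fun_prop)).symm
    _ = cfc (id : ℝ → ℝ) A :=
        cfc_congr fun x hx => Real.mul_self_sqrt (spectrum_nonneg_of_nonneg hA hx)
    _ = A := cfc_id ℝ A

lemma sqrtOp_isUnit {A : 𝔅} (hA : 0 ≤ A) (hAu : IsUnit A) : IsUnit (sqrtOp A) := by
  have hsa : IsSelfAdjoint A := IsSelfAdjoint.of_nonneg hA
  exact (isUnit_cfc_iff Real.sqrt A (by fun_prop)).mpr
    fun x hx => (Real.sqrt_pos.mpr (spec_pos hA hAu x hx)).ne'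

lemma sqrtOp_inv_eq {A : 𝔅} (hA : 0 ≤ A) (hAu : IsUnit A) :
    Ring.inverse (sqrtOp A) = cfc (fun x => (Real.sqrt x)⁻¹) A := by
  have hsa : IsSelfAdjoint A := IsSelfAdjoint.of_nonneg hA
  exact (cfc_inv (f := Real.sqrt) (a := A)
    (fun x hx => (Real.sqrt_pos.mpr (spec_pos hA hAu x hx)).ne') (by fun_prop)).symm

lemma sqrtOp_inv_isSelfAdjoint {A : 𝔅} (hA : 0 ≤ A) (hAu : IsUnit A) :
    IsSelfAdjoint (Ring.inverse (sqrtOp A)) := by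
  rw [sqrtOp_inv_eq hA hAu]; exact cfc_predicate _ _

/-- The positive element `A^{-1/2} B A^{-1/2}`. -/
noncomputable def cOp (A B : 𝔅) : 𝔅 :=
  Ring.inverse (sqrtOp A) * B * Ring.inverse (sqrtOp A)

lemma cOp_nonneg {A B : 𝔅} (hA : 0 ≤ A) (hAu : IsUnit A) (hB : 0 ≤ B) : 0 ≤ cOp A B := by
  rw [cOp]
  nth_rewrite 2 [← (sqrtOp_inv_isSelfAdjoint hA hAu).star_eq]
  exact star_right_conjugate_nonneg hB _

lemma cOp_isUnit {A B : 𝔅} (hA : 0 ≤ A) (hAu : IsUnit A) (hBu : IsUnit B) :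
    IsUnit (cOp A B) := by
  have h : IsUnit (Ring.inverse (sqrtOp A)) :=
    isUnit_ringInverse.mpr (sqrtOp_isUnit hA hAu)
  exact (h.mul hBu).mul h

lemma repB {A B : 𝔅} (hA : 0 ≤ A) (hAu : IsUnit A) :
    sqrtOp A * cOp A B * sqrtOp A = B := by
  have hu := sqrtOp_isUnit hA hAu
  rw [cOp, ← mul_assoc, ← mul_assoc, Ring.mul_inverse_cancel _ hu, one_mul, mul_assoc,
    Ring.inverse_mul_cancel _ hu, mul_one]

lemma repId {A B : 𝔅} (hA : 0 ≤ A) (hAu : IsUnit A) (hB : 0 ≤ B) :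
    sqrtOp A * cfc (id : ℝ → ℝ) (cOp A B) * sqrtOp A = B := by
  have hc : IsSelfAdjoint (cOp A B) := IsSelfAdjoint.of_nonneg (cOp_nonneg hA hAu hB)
  rw [cfc_id ℝ (cOp A B) (ha := hc), repB hA hAu]

lemma repOne {A B : 𝔅} (hA : 0 ≤ A) (hAu : IsUnit A) (hB : 0 ≤ B) :
    sqrtOp A * cfc (fun _ : ℝ => (1 : ℝ)) (cOp A B) * sqrtOp A = A := by
  have hc : IsSelfAdjoint (cOp A B) := IsSelfAdjoint.of_nonneg (cOp_nonneg hA hAu hB)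
  rw [show (fun _ : ℝ => (1 : ℝ)) = (1 : ℝ → ℝ) from rfl, cfc_one ℝ (cOp A B) hc, mul_one,
    sqrtOp_mul_self hA]

lemma repN {A B : 𝔅} (hA : 0 ≤ A) (hAu : IsUnit A) (hB : 0 ≤ B) (v : ℝ) :
    opWArith v A B = sqrtOp A * cfc (fun x : ℝ => 1 - v + v * x) (cOp A B) * sqrtOp A := by
  have hc : IsSelfAdjoint (cOp A B) := IsSelfAdjoint.of_nonneg (cOp_nonneg hA hAu hB)
  have h1 : cfc (fun x : ℝ => 1 - v + v * x) (cOp A B)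
      = (1 - v) • (1 : 𝔅) + v • cOp A B := by
    rw [cfc_add (cOp A B) (fun _ => (1 - v : ℝ)) (fun x => v * x) (by fun_prop) (by fun_prop),
      cfc_const (1 - v) (cOp A B) (ha := hc), cfc_const_mul_id v (cOp A B) (ha := hc),
      Algebra.algebraMap_eq_smul_one]
  rw [h1, mul_add, add_mul, mul_smul_comm, smul_mul_assoc, mul_one, sqrtOp_mul_self hA,
    mul_smul_comm, smul_mul_assoc, repB hA hAu]
  rfl

lemma opMeanOf_def (f : ℝ → ℝ) (A B : 𝔅) :
    opMeanOf f A B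
      = sqrtOp A * cfc f (Ring.inverse (sqrtOp A) * B * Ring.inverse (sqrtOp A)) * sqrtOp A := rfl

lemma opMeanOf_conj (f g h : ℝ → ℝ) (A c : 𝔅) (hA : 0 ≤ A) (hAu : IsUnit A) (hc : 0 ≤ c)
    (hg : ContinuousOn g (spectrum ℝ c)) (hh : ContinuousOn h (spectrum ℝ c))
    (hgpos : ∀ x ∈ spectrum ℝ c, 0 < g x) (hhpos : ∀ x ∈ spectrum ℝ c, 0 < h x)
    (hf : ContinuousOn f (Set.Ioi 0)) :
    opMeanOf f (sqrtOp A * cfc g c * sqrtOp A) (sqrtOp A * cfc h c * sqrtOp A)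
      = sqrtOp A * cfc (fun x => g x * f (h x / g x)) c * sqrtOp A := by
  have cancel : ∀ p q : 𝔅, p * q = 1 → ∀ b, p * (q * b) = b := fun p q hpq b => by
    rw [← mul_assoc, hpq, one_mul]
  have hcsa : IsSelfAdjoint c := IsSelfAdjoint.of_nonneg hc
  have hsA : IsSelfAdjoint (sqrtOp A) := sqrtOp_isSelfAdjoint A
  have hsAu : IsUnit (sqrtOp A) := sqrtOp_isUnit hA hAu
  set sA := sqrtOp A with hsAe
  set iA := Ring.inverse sA with hiAe
  have hsA1 : sA * iA = 1 := Ring.mul_inverse_cancel _ hsAu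
  have hsA2 : iA * sA = 1 := Ring.inverse_mul_cancel _ hsAu
  set X := cfc g c with hXe
  set Yh := cfc h c with hYe
  have hX0 : 0 ≤ X := cfc_nonneg fun x hx => (hgpos x hx).le
  have hXu : IsUnit X := by
    rw [hXe]
    exact (isUnit_cfc_iff g c (hf := hg) (ha := hcsa)).mpr fun x hx => (hgpos x hx).ne'
  set W := sA * X * sA with hWe
  have hW0 : 0 ≤ W := by
    have h1 := star_right_conjugate_nonneg hX0 sA
    rwa [hsA.star_eq] at h1
  have hWu : IsUnit W := (hsAu.mul hXu).mul hsAu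
  rw [opMeanOf_def]
  set t := sqrtOp W with hte
  set it := Ring.inverse t with hite
  have htu : IsUnit t := sqrtOp_isUnit hW0 hWu
  have htt : t * t = W := sqrtOp_mul_self hW0
  have ht1 : t * it = 1 := Ring.mul_inverse_cancel _ htu
  have ht2 : it * t = 1 := Ring.inverse_mul_cancel _ htu
  have hitsa : IsSelfAdjoint it := by rw [hite, hte]; exact sqrtOp_inv_isSelfAdjoint hW0 hWu
  have hgs : ContinuousOn (fun x => Real.sqrt (g x)) (spectrum ℝ c) :=
    Real.continuous_sqrt.comp_continuousOn hg
  have hgsne : ∀ x ∈ spectrum ℝ c, Real.sqrt (g x) ≠ 0 :=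
    fun x hx => (Real.sqrt_pos.mpr (hgpos x hx)).ne'
  have hgi : ContinuousOn (fun x => (g x)⁻¹) (spectrum ℝ c) :=
    hg.inv₀ fun x hx => (hgpos x hx).ne'
  set sX := cfc (fun x => Real.sqrt (g x)) c with hsXe
  set Xi := cfc (fun x => (g x)⁻¹) c with hXie
  have hsXsa : IsSelfAdjoint sX := cfc_predicate _ _
  have hsX2 : sX * sX = X := by
    rw [hsXe, hXe, ← cfc_mul _ _ c hgs hgs]
    exact cfc_congr fun x hx => Real.mul_self_sqrt (hgpos x hx).le
  have hXXi : X * Xi = 1 := by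
    rw [hXe, hXie, ← cfc_mul _ _ c hg hgi,
      cfc_congr (g := fun _ => (1 : ℝ)) fun x hx => mul_inv_cancel₀ (hgpos x hx).ne']
    exact cfc_one ℝ c hcsa
  have hWZ : W * (iA * Xi * iA) = 1 := by
    rw [hWe]
    simp only [mul_assoc]
    rw [cancel sA iA hsA1, cancel X Xi hXXi]
    exact hsA1
  have hitit : it * it = iA * Xi * iA := by
    have h1 : it * it * W = 1 := by
      rw [← htt]
      simp only [mul_assoc]
      rw [cancel it t ht2]
      exact ht2
    calc it * it = it * it * (W * (iA * Xi * iA)) := by rw [hWZ, mul_one]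
      _ = (it * it * W) * (iA * Xi * iA) := by rw [← mul_assoc]
      _ = iA * Xi * iA := by rw [h1, one_mul]
  set u := it * (sA * sX) with hue
  have hstaru : star u = sX * sA * it := by
    rw [hue, star_mul, star_mul, hsXsa.star_eq, hsA.star_eq, hitsa.star_eq, mul_assoc]
  have hsq : ∀ b, sX * (sX * b) = X * b := fun b => by rw [← mul_assoc, hsX2]
  have hu1 : u * star u = 1 := by
    rw [hstaru, hue]
    simp only [mul_assoc]
    rw [hsq]
    have hW' : sA * (X * (sA * it)) = W * it := by rw [hWe]; simp only [mul_assoc]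
    rw [hW', ← htt]
    simp only [mul_assoc]
    rw [ht1, mul_one]
    exact ht2
  have hu2 : star u * u = 1 := by
    rw [hstaru, hue]
    simp only [mul_assoc]
    have hii : ∀ b, it * (it * b) = iA * (Xi * (iA * b)) := fun b => by
      rw [← mul_assoc, hitit]; simp only [mul_assoc]
    rw [hii, cancel sA iA hsA1, cancel iA sA hsA2]
    rw [hsXe, hXie, ← cfc_mul _ _ c hgi hgs, ← cfc_mul _ (fun x => (g x)⁻¹ * Real.sqrt (g x)) c hgs (hgi.mul hgs),
      cfc_congr (g := fun _ => (1 : ℝ)) (fun x hx => by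
        have h1 := hgpos x hx
        have h2 : Real.sqrt (g x) * Real.sqrt (g x) = g x := Real.mul_self_sqrt h1.le
        calc Real.sqrt (g x) * ((g x)⁻¹ * Real.sqrt (g x))
            = (Real.sqrt (g x) * Real.sqrt (g x)) * (g x)⁻¹ := by ring
          _ = 1 := by rw [h2, mul_inv_cancel₀ h1.ne'])]
    exact cfc_one ℝ c hcsa
  have huni : u ∈ unitary 𝔅 := Unitary.mem_iff.mpr ⟨hu2, hu1⟩
  have hDcont : ContinuousOn (fun x => h x / g x) (spectrum ℝ c) :=
    hh.div hg fun x hx => (hgpos x hx).ne'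
  set D := cfc (fun x => h x / g x) c with hDe
  have hDsa : IsSelfAdjoint D := cfc_predicate _ _
  have hfD : ContinuousOn f (spectrum ℝ D) := by
    refine hf.mono ?_
    rw [hDe, cfc_map_spectrum (f := fun x => h x / g x) (a := c) (ha := hcsa) (hf := hDcont)]
    rintro y ⟨x, hx, rfl⟩
    exact div_pos (hhpos x hx) (hgpos x hx)
  have hmid0 : sX * D * sX = Yh := by
    rw [hsXe, hDe, hYe, ← cfc_mul _ _ c hgs hDcont,
      ← cfc_mul (fun x => Real.sqrt (g x) * (h x / g x)) _ c (hgs.mul hDcont) hgs]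
    refine cfc_congr fun x hx => ?_
    have h1 := hgpos x hx
    have h2 : Real.sqrt (g x) * Real.sqrt (g x) = g x := Real.mul_self_sqrt h1.le
    calc Real.sqrt (g x) * (h x / g x) * Real.sqrt (g x)
        = (Real.sqrt (g x) * Real.sqrt (g x)) * (h x / g x) := by ring
      _ = h x := by rw [h2]; field_simp
  have hmid : ∀ b, sX * (D * (sX * b)) = Yh * b := fun b => by
    rw [← mul_assoc, ← mul_assoc, hmid0]
  have hkey : it * (sA * Yh * sA) * it = u * D * star u := by
    rw [hstaru, hue]
    simp only [mul_assoc]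
    rw [hmid]
  have hcfc : cfc f (it * (sA * Yh * sA) * it) = u * cfc f D * star u := by
    rw [hkey]
    exact cfc_unitary_conj ⟨u, huni⟩ D hDsa f hfD
  rw [hcfc, hstaru, hue]
  have hGcont : ContinuousOn (fun x => f (h x / g x)) (spectrum ℝ c) := by
    refine hf.comp hDcont fun x hx => div_pos (hhpos x hx) (hgpos x hx)
  have hcomp : cfc f D = cfc (fun x => f (h x / g x)) c := by
    rw [hDe, ← cfc_comp f (fun x => h x / g x) c (ha := hcsa)
      (hg := by
        rwa [← cfc_map_spectrum (f := fun x => h x / g x) (a := c) (ha := hcsa) (hf := hDcont),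
          ← hDe])
      (hf := hDcont)]
    rfl
  have hfin : sX * cfc f D * sX = cfc (fun x => g x * f (h x / g x)) c := by
    rw [hcomp, hsXe, ← cfc_mul _ _ c hgs hGcont,
      ← cfc_mul (fun x => Real.sqrt (g x) * f (h x / g x)) _ c (hgs.mul hGcont) hgs]
    refine cfc_congr fun x hx => ?_
    have h2 : Real.sqrt (g x) * Real.sqrt (g x) = g x := Real.mul_self_sqrt (hgpos x hx).le
    linear_combination f (h x / g x) * h2
  calc t * (it * (sA * sX) * cfc f D * (sX * sA * it)) * t
      = (t * it) * (sA * (sX * cfc f D * sX) * sA) * (it * t) := by simp only [mul_assoc]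
    _ = sA * (sX * cfc f D * sX) * sA := by rw [ht1, ht2, one_mul, mul_one]
    _ = sA * cfc (fun x => g x * f (h x / g x)) c * sA := by rw [hfin]

end op

/-- For positive invertible operators `A, B` on a complex Hilbert space and `v ∈ (0,1)`:
`I_v(A,B) = I(A∇_v B, A) ♯_v I(A∇_v B, B)`. -/
theorem opWId_eq_wGeom_opId (A B : H →L[ℂ] H)
    (hA : 0 ≤ A) (hB : 0 ≤ B) (hAu : IsUnit A) (hBu : IsUnit B)
    (v : ℝ) (hv : v ∈ Set.Ioo (0 : ℝ) 1) :
    opWId v A B = opWGeom v (opId (opWArith v A B) A) (opId (opWArith v A B) B) := by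
  obtain ⟨hv0, hv1⟩ := hv
  have hc0 : 0 ≤ cOp A B := cOp_nonneg hA hAu hB
  have hcu : IsUnit (cOp A B) := cOp_isUnit hA hAu hBu
  have hcpos : ∀ x ∈ spectrum ℝ (cOp A B), 0 < x := spec_pos hc0 hcu
  have hgcont : ContinuousOn (fun x : ℝ => 1 - v + v * x) (spectrum ℝ (cOp A B)) := by fun_prop
  have hgpos : ∀ x ∈ spectrum ℝ (cOp A B), 0 < 1 - v + v * x := fun x hx => by
    have := hcpos x hx; nlinarith
  -- X = I(A ∇_v B, A)
  have e1 : opId (opWArith v A B) A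
      = sqrtOp A * cfc (fun x => (1 - v + v * x) * fdI ((fun _ : ℝ => (1:ℝ)) x / (1 - v + v * x)))
          (cOp A B) * sqrtOp A := by
    have h1 : opId (opWArith v A B) A
        = opMeanOf fdI (sqrtOp A * cfc (fun x : ℝ => 1 - v + v * x) (cOp A B) * sqrtOp A)
            (sqrtOp A * cfc (fun _ : ℝ => (1:ℝ)) (cOp A B) * sqrtOp A) := by
      show opMeanOf fdI (opWArith v A B) A = _
      rw [repN hA hAu hB v]
      exact congrArg _ (repOne hA hAu hB).symm
    rw [h1]
    exact opMeanOf_conj fdI _ _ A (cOp A B) hA hAu hc0 hgcont (by fun_prop) hgpos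
      (fun x _ => one_pos) fdI_continuousOn
  -- Y = I(A ∇_v B, B)
  have e2 : opId (opWArith v A B) B
      = sqrtOp A * cfc (fun x => (1 - v + v * x) * fdI (id x / (1 - v + v * x)))
          (cOp A B) * sqrtOp A := by
    have h1 : opId (opWArith v A B) B
        = opMeanOf fdI (sqrtOp A * cfc (fun x : ℝ => 1 - v + v * x) (cOp A B) * sqrtOp A)
            (sqrtOp A * cfc (id : ℝ → ℝ) (cOp A B) * sqrtOp A) := by
      show opMeanOf fdI (opWArith v A B) B = _
      rw [repN hA hAu hB v]
      exact congrArg _ (repId hA hAu hB).symm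
    rw [h1]
    exact opMeanOf_conj fdI _ _ A (cOp A B) hA hAu hc0 hgcont (by fun_prop) hgpos
      (fun x hx => hcpos x hx) fdI_continuousOn
  -- the two representing functions
  have hIoi : ∀ x ∈ spectrum ℝ (cOp A B), (1 : ℝ) / (1 - v + v * x) ∈ Set.Ioi (0:ℝ) :=
    fun x hx => div_pos one_pos (hgpos x hx)
  have hIoi2 : ∀ x ∈ spectrum ℝ (cOp A B), x / (1 - v + v * x) ∈ Set.Ioi (0:ℝ) :=
    fun x hx => div_pos (hcpos x hx) (hgpos x hx)
  have hpcont : ContinuousOn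
      (fun x => (1 - v + v * x) * fdI ((fun _ : ℝ => (1:ℝ)) x / (1 - v + v * x)))
      (spectrum ℝ (cOp A B)) := by
    refine hgcont.mul (fdI_continuousOn.comp
      (continuousOn_const.div hgcont fun x hx => (hgpos x hx).ne') hIoi)
  have hqcont : ContinuousOn
      (fun x => (1 - v + v * x) * fdI (id x / (1 - v + v * x)))
      (spectrum ℝ (cOp A B)) := by
    refine hgcont.mul (fdI_continuousOn.comp
      ((continuousOn_id).div hgcont fun x hx => (hgpos x hx).ne') hIoi2)
  have hppos : ∀ x ∈ spectrum ℝ (cOp A B),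
      0 < (1 - v + v * x) * fdI ((fun _ : ℝ => (1:ℝ)) x / (1 - v + v * x)) :=
    fun x hx => mul_pos (hgpos x hx) (fdI_pos (hIoi x hx))
  have hqpos : ∀ x ∈ spectrum ℝ (cOp A B),
      0 < (1 - v + v * x) * fdI (id x / (1 - v + v * x)) :=
    fun x hx => mul_pos (hgpos x hx) (fdI_pos (hIoi2 x hx))
  have hrpow : ContinuousOn (fun x : ℝ => x ^ v) (Set.Ioi (0:ℝ)) := fun x hx =>
    (Real.continuousAt_rpow_const x v (Or.inl (ne_of_gt hx))).continuousWithinAt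
  -- assemble
  show sqrtOp A * cfc (fun x => wIdScalar v 1 x) (cOp A B) * sqrtOp A = _
  rw [show opWGeom v (opId (opWArith v A B) A) (opId (opWArith v A B) B)
      = opMeanOf (fun x => x ^ v) (opId (opWArith v A B) A) (opId (opWArith v A B) B) from rfl,
    e1, e2, opMeanOf_conj (fun x => x ^ v) _ _ A (cOp A B) hA hAu hc0 hpcont hqcont
      hppos hqpos hrpow]
  congr 1
  congr 1
  refine cfc_congr fun x hx => ?_
  have hxpos := hcpos x hx
  simpa only [id_eq] using scalar_key hv0 hv1 hxpos
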